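/- If the rooted graph (G,K) contains (W_{3k+1}, K_{W_{3k+1}}) — the (3k+1)×(3k+1) grid rooted at its first row — as a rooted minor, then the K-free treewidth satisfies tw_K(G,K) ≥ k. -/

import Mathlib

namespace TDMPaper

/-- A finite multigraph without loops: edges carry their unordered pair of endpoints. -/
structure MGraph where
  V : Type
  E : Type
  finV : Finite V
  finE : Finite E
  ends : E → Sym2 V
  loopless : ∀ e, ¬ (ends e).IsDiag

attribute [instance] MGraph.finV MGraph.finE

namespace MGraph

/-- A cycle in a multigraph, given by cyclically ordered distinct vertices and
distinct edges. -/
structure Cycle (G : MGraph) where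
  n : ℕ
  npos : 0 < n
  vtx : Fin n → G.V
  edge : Fin n → G.E
  vtx_inj : Function.Injective vtx
  edge_inj : Function.Injective edge
  ends_eq : ∀ i : Fin n,
    G.ends (edge i) = s(vtx i, vtx ⟨(i.1 + 1) % n, Nat.mod_lt _ npos⟩)

/-- The parity of a cycle with respect to a signing `γ`. -/
def Cycle.parity {G : MGraph} (C : G.Cycle) (γ : G.E → ZMod 2) : ZMod 2 :=
  ∑ i, γ (C.edge i)

/-- The vertex set of a cycle. -/
def Cycle.support {G : MGraph} (C : G.Cycle) : Set G.V := Set.range C.vtx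

/-- The odd cycle packing number of a signed graph: the maximum number of pairwise
vertex-disjoint odd cycles. -/
noncomputable def OCP (G : MGraph) (γ : G.E → ZMod 2) : ℕ :=
  sSup {k : ℕ | ∃ C : Fin k → G.Cycle,
    (∀ i, (C i).parity γ = 1) ∧
    ∀ i j, i ≠ j → Disjoint ((C i).support) ((C j).support)}

/-- The subgraph induced by a vertex set `S` (kept on the same vertex type; only
edges with both endpoints in `S` survive). -/
def induce (G : MGraph) (S : Set G.V) : MGraph where
  V := G.V
  E := {e : G.E // ∀ v ∈ G.ends e, v ∈ S}
  finV := G.finV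
  finE := inferInstance
  ends := fun e => G.ends e.1
  loopless := fun e => G.loopless e.1

/-- The odd cycle packing number of the subgraph induced on `S`, signs inherited. -/
noncomputable def OCPOn (G : MGraph) (γ : G.E → ZMod 2) (S : Set G.V) : ℕ :=
  (G.induce S).OCP (fun e => γ e.1)

/-- A path in a multigraph. -/
structure Path (G : MGraph) where
  n : ℕ
  vtx : Fin (n + 1) → G.V
  edge : Fin n → G.E
  vtx_inj : Function.Injective vtx
  ends_eq : ∀ i : Fin n, G.ends (edge i) = s(vtx i.castSucc, vtx i.succ)

def Path.first {G : MGraph} (P : G.Path) : G.V := P.vtx 0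
def Path.last {G : MGraph} (P : G.Path) : G.V := P.vtx (Fin.last P.n)
def Path.support {G : MGraph} (P : G.Path) : Set G.V := Set.range P.vtx
def Path.internals {G : MGraph} (P : G.Path) : Set G.V :=
  P.support \ {P.first, P.last}
def Path.parity {G : MGraph} (P : G.Path) (γ : G.E → ZMod 2) : ZMod 2 :=
  ∑ i, γ (P.edge i)

end MGraph

open MGraph

/-- `γ'` is obtained from `γ` by a sequence of shiftings at vertices. -/
def IsShift (G : MGraph) (γ γ' : G.E → ZMod 2) : Prop :=
  ∃ σ : G.V → ZMod 2, ∀ e u v, G.ends e = s(u, v) → γ' e = γ e + σ u + σ v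

/-- A minor model of `H` in `G`: disjoint nonempty connected branch sets and an
injective assignment of edges. -/
structure MinorModel (H G : MGraph) where
  bs : H.V → Set G.V
  em : H.E → G.E
  bs_nonempty : ∀ v, (bs v).Nonempty
  bs_disjoint : ∀ u v, u ≠ v → Disjoint (bs u) (bs v)
  bs_connected : ∀ v, ∀ a ∈ bs v, ∀ b ∈ bs v,
    Relation.ReflTransGen
      (fun x y => x ∈ bs v ∧ y ∈ bs v ∧ ∃ e, G.ends e = s(x, y)) a b
  em_inj : Function.Injective em
  em_ends : ∀ eH u v, H.ends eH = s(u, v) →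
    ∃ a ∈ bs u, ∃ b ∈ bs v, G.ends (em eH) = s(a, b)

/-- `H` is a minor of `G`. -/
def IsMinor (H G : MGraph) : Prop := Nonempty (MinorModel H G)

/-- `(H,KH)` is a rooted minor of `(G,KG)`: there is a minor model in which the
branch set of every root of `H` contains a root of `G`. -/
def IsRootedMinor (H : MGraph) (KH : Set H.V) (G : MGraph) (KG : Set G.V) : Prop :=
  ∃ M : MinorModel H G, ∀ v ∈ KH, (M.bs v ∩ KG).Nonempty

/-- A signed minor model of `(H,γH)` in `(G,γG)`: after shifting, branch sets are
connected through even edges and edges of `H` get edges of `G` of the correct sign. -/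
structure SignedMinorModel (H G : MGraph) (γH : H.E → ZMod 2) (γG : G.E → ZMod 2) where
  γ' : G.E → ZMod 2
  shift : IsShift G γG γ'
  bs : H.V → Set G.V
  em : H.E → G.E
  bs_nonempty : ∀ v, (bs v).Nonempty
  bs_disjoint : ∀ u v, u ≠ v → Disjoint (bs u) (bs v)
  bs_connected : ∀ v, ∀ a ∈ bs v, ∀ b ∈ bs v,
    Relation.ReflTransGen
      (fun x y => x ∈ bs v ∧ y ∈ bs v ∧ ∃ e, γ' e = 0 ∧ G.ends e = s(x, y)) a b
  em_inj : Function.Injective em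
  em_ends : ∀ eH u v, H.ends eH = s(u, v) →
    ∃ a ∈ bs u, ∃ b ∈ bs v, G.ends (em eH) = s(a, b)
  em_parity : ∀ eH, γ' (em eH) = γH eH

/-- `(H,γH)` is a signed graph minor of `(G,γG)`. -/
def IsSignedMinor (H : MGraph) (γH : H.E → ZMod 2) (G : MGraph)
    (γG : G.E → ZMod 2) : Prop :=
  Nonempty (SignedMinorModel H G γH γG)

/-- `(H,γH,KH)` is a rooted signed graph minor of `(G,γG,KG)`. -/
def IsRootedSignedMinor (H : MGraph) (γH : H.E → ZMod 2) (KH : Set H.V)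
    (G : MGraph) (γG : G.E → ZMod 2) (KG : Set G.V) : Prop :=
  ∃ M : SignedMinorModel H G γH γG, ∀ v ∈ KH, (M.bs v ∩ KG).Nonempty

/-- An odd minor model of `H` in `G`: a minor model together with a 2-colouring of
`G` which is proper on each branch set (branch sets are connected through
bichromatic edges) and for which every model edge is monochromatic. -/
structure OddMinorModel (H G : MGraph) where
  bs : H.V → Set G.V
  em : H.E → G.E
  col : G.V → ZMod 2
  bs_nonempty : ∀ v, (bs v).Nonempty
  bs_disjoint : ∀ u v, u ≠ v → Disjoint (bs u) (bs v)
  bs_connected : ∀ v, ∀ a ∈ bs v, ∀ b ∈ bs v,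
    Relation.ReflTransGen
      (fun x y => x ∈ bs v ∧ y ∈ bs v ∧ col x ≠ col y ∧ ∃ e, G.ends e = s(x, y)) a b
  em_inj : Function.Injective em
  em_ends : ∀ eH u v, H.ends eH = s(u, v) →
    ∃ a ∈ bs u, ∃ b ∈ bs v, G.ends (em eH) = s(a, b)
  em_mono : ∀ eH u v, G.ends (em eH) = s(u, v) → col u = col v

/-- `G` contains `H` as an odd-minor. -/
def IsOddMinor (H G : MGraph) : Prop := Nonempty (OddMinorModel H G)

/-- `(G,γG)` contains `(H,γH)` as a subdivision. -/
def IsSignedSubdivision (H : MGraph) (γH : H.E → ZMod 2) (G : MGraph)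
    (γG : G.E → ZMod 2) : Prop :=
  ∃ (γH' : H.E → ZMod 2) (_ : IsShift H γH γH')
    (φV : H.V → G.V) (φE : H.E → G.Path),
    Function.Injective φV ∧
    (∀ eH u v, H.ends eH = s(u, v) →
      s((φE eH).first, (φE eH).last) = s(φV u, φV v)) ∧
    (∀ eH, (φE eH).parity γG = γH' eH) ∧
    (∀ e e', e ≠ e' → Disjoint ((φE e).internals) ((φE e').support)) ∧
    (∀ e, Disjoint ((φE e).internals) (Set.range φV))

/-! ## Tree decompositions and width parameters -/

/-- A tree decomposition of a multigraph. -/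
structure TreeDecomp (G : MGraph) where
  ι : Type
  tree : SimpleGraph ι
  isTree : tree.IsTree
  bag : ι → Set G.V
  covers_vertex : ∀ v, ∃ t, v ∈ bag t
  covers_edge : ∀ e, ∃ t, ∀ v ∈ G.ends e, v ∈ bag t
  bag_connected : ∀ v, (tree.induce {t | v ∈ bag t}).Connected

/-- A node of a tree is a leaf if it has at most one neighbour. -/
def IsLeaf {ι : Type} (T : SimpleGraph ι) (t : ι) : Prop :=
  (T.neighborSet t).Subsingleton

/-- A tree `K`-free-decomposition. -/
structure KFreeDecomp (G : MGraph) (K : Set G.V) extends TreeDecomp G where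
  L : Set G.V
  L_disj : Disjoint L K
  unique_bag : ∀ v ∈ L, ∃! t, v ∈ bag t
  leaf_bag : ∀ v ∈ L, ∀ t, v ∈ bag t → IsLeaf tree t

/-- The width of a tree `K`-free-decomposition: `max {0, max_t |β(t)\L| - 1}`. -/
noncomputable def KFreeDecomp.width {G : MGraph} {K : Set G.V}
    (D : KFreeDecomp G K) : ℕ :=
  ⨆ t : D.ι, ((D.bag t \ D.L).ncard - 1)

/-- The `K`-free treewidth of `(G,K)`. -/
noncomputable def twK (G : MGraph) (K : Set G.V) : ℕ :=
  sInf {w | ∃ D : KFreeDecomp G K, D.width = w}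

/-- A tame OCP-tree-decomposition of a signed graph. -/
structure TameOCPDecomp (G : MGraph) (γ : G.E → ZMod 2) extends TreeDecomp G where
  prot : ι → Set G.V
  prot_sub : ∀ t, prot t ⊆ bag t
  prot_adh : ∀ t t', tree.Adj t t' → ((bag t ∩ bag t') \ prot t).ncard ≤ 1

/-- The tame width (t-width) of a tame OCP-tree-decomposition. -/
noncomputable def TameOCPDecomp.twidth {G : MGraph} {γ : G.E → ZMod 2}
    (D : TameOCPDecomp G γ) : ℕ :=
  ⨆ t : D.ι, ((D.prot t).ncard + G.OCPOn γ (D.bag t \ D.prot t))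

/-- The tame OCP-treewidth of a signed graph. -/
noncomputable def tOCPtw (G : MGraph) (γ : G.E → ZMod 2) : ℕ :=
  sInf {w | ∃ D : TameOCPDecomp G γ, D.twidth = w}

/-- A TDM-tree-decomposition of a rooted signed graph. -/
structure TDMDecomp (G : MGraph) (γ : G.E → ZMod 2) (K : Set G.V)
    extends TreeDecomp G where
  prot : ι → Set G.V
  J : Set ι
  J_subtree : J.Nonempty → (tree.induce J).Connected
  prot_sub : ∀ t, prot t ⊆ bag t
  prot_roots : ∀ t, K ∩ bag t ⊆ prot t
  prot_adh : ∀ t t', tree.Adj t t' → ((bag t ∩ bag t') \ prot t).ncard ≤ 1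
  strong : ∀ t ∈ J, ∀ t', tree.Adj t t' → bag t ∩ bag t' ⊆ prot t
  roots_in_J : K ⊆ ⋃ j ∈ J, bag j

/-- The width of a TDM-tree-decomposition. -/
noncomputable def TDMDecomp.width {G : MGraph} {γ : G.E → ZMod 2} {K : Set G.V}
    (D : TDMDecomp G γ K) : ℕ :=
  ⨆ t : D.ι, ((D.prot t).ncard + G.OCPOn γ (D.bag t \ D.prot t))

/-- The TDM-treewidth of a rooted signed graph. -/
noncomputable def TDMtw (G : MGraph) (γ : G.E → ZMod 2) (K : Set G.V) : ℕ :=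
  sInf {w | ∃ D : TDMDecomp G γ K, D.width = w}

/-! ## Grids, parity handles, parity vortices -/

/-- Adjacency of the grid, on `ℕ × ℕ` coordinates. -/
def gridAdj (a b : ℕ × ℕ) : Prop :=
  (a.1 = b.1 ∧ (a.2 + 1 = b.2 ∨ b.2 + 1 = a.2)) ∨
  (a.2 = b.2 ∧ (a.1 + 1 = b.1 ∨ b.1 + 1 = a.1))

/-- The `k × k` grid. -/
def gridGraph (k : ℕ) : MGraph where
  V := Fin k × Fin k
  E := {e : Sym2 (Fin k × Fin k) //
    ∃ a b : Fin k × Fin k, gridAdj (a.1.1, a.2.1) (b.1.1, b.2.1) ∧ e = s(a, b)}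
  finV := inferInstance
  finE := inferInstance
  ends := Subtype.val
  loopless := fun e he => by
    obtain ⟨a, b, hab, h⟩ := e.2
    rw [h, Sym2.mk_isDiag_iff] at he
    subst he
    rcases hab with ⟨_, h' | h'⟩ | ⟨_, h' | h'⟩ <;> omega

/-- The first row of the `k × k` grid. -/
def firstRow (k : ℕ) : Set (gridGraph k).V := {p : Fin k × Fin k | p.1.1 = 0}

/-- The `i`-th designated vertex `x_i` on the outer face of the cylindrical
`(k × 4k)`-grid (every other vertex, `0`-indexed). -/
def xvtx (k : ℕ) (i : Fin (2 * k)) : Fin k × Fin (4 * k) :=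
  (⟨0, by have := i.2; omega⟩, ⟨2 * i.1, by have := i.2; omega⟩)

/-- Adjacency of the cylindrical `(k × 4k)`-grid `P_k □ C_{4k}`. -/
def cylAdj (k : ℕ) (a b : Fin k × Fin (4 * k)) : Prop :=
  (a.1 = b.1 ∧ (a.2.1 + 1 = b.2.1 ∨ b.2.1 + 1 = a.2.1 ∨
    (a.2.1 = 0 ∧ b.2.1 + 1 = 4 * k) ∨ (b.2.1 = 0 ∧ a.2.1 + 1 = 4 * k))) ∨
  (a.2 = b.2 ∧ (a.1.1 + 1 = b.1.1 ∨ b.1.1 + 1 = a.1.1))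

/-- The chords `x_i x_{2k-i+1}` of the parity handle. -/
def handleChord (k : ℕ) (e : Sym2 (Fin k × Fin (4 * k))) : Prop :=
  ∃ i : Fin k, e = s(xvtx k ⟨i.1, by have := i.2; omega⟩,
    xvtx k ⟨2 * k - 1 - i.1, by have := i.2; omega⟩)

/-- The chords `x_{2i-1} x_{2i}` of the parity vortex. -/
def vortexChord (k : ℕ) (e : Sym2 (Fin k × Fin (4 * k))) : Prop :=
  ∃ i : Fin k, e = s(xvtx k ⟨2 * i.1, by have := i.2; omega⟩,
    xvtx k ⟨2 * i.1 + 1, by have := i.2; omega⟩)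

lemma xvtx_ne (k : ℕ) (i j : Fin (2 * k)) (h : i.1 ≠ j.1) : xvtx k i ≠ xvtx k j := by
  intro hc
  have := congrArg (fun p => p.2.1) hc
  simp only [xvtx] at this
  omega

/-- The unsigned, unrooted parity handle `H_k`. -/
def handleGraph (k : ℕ) : MGraph where
  V := Fin k × Fin (4 * k)
  E := {e : Sym2 (Fin k × Fin (4 * k)) //
    (∃ a b, cylAdj k a b ∧ e = s(a, b)) ∨ handleChord k e}
  finV := inferInstance
  finE := inferInstance
  ends := Subtype.val
  loopless := fun e he => by
    rcases e.2 with ⟨a, b, hab, h⟩ | ⟨i, h⟩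
    · rw [h, Sym2.mk_isDiag_iff] at he
      subst he
      have h1 := a.1.2
      have h2 := a.2.2
      rcases hab with ⟨_, h' | h' | ⟨h', h''⟩ | ⟨h', h''⟩⟩ | ⟨_, h' | h'⟩ <;> omega
    · rw [h, Sym2.mk_isDiag_iff] at he
      have := i.2
      exact xvtx_ne k _ _ (show (i.1 : ℕ) ≠ 2 * k - 1 - i.1 by omega) he

/-- The unsigned, unrooted parity vortex `V_k`. -/
def vortexGraph (k : ℕ) : MGraph where
  V := Fin k × Fin (4 * k)
  E := {e : Sym2 (Fin k × Fin (4 * k)) //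
    (∃ a b, cylAdj k a b ∧ e = s(a, b)) ∨ vortexChord k e}
  finV := inferInstance
  finE := inferInstance
  ends := Subtype.val
  loopless := fun e he => by
    rcases e.2 with ⟨a, b, hab, h⟩ | ⟨i, h⟩
    · rw [h, Sym2.mk_isDiag_iff] at he
      subst he
      have h1 := a.1.2
      have h2 := a.2.2
      rcases hab with ⟨_, h' | h' | ⟨h', h''⟩ | ⟨h', h''⟩⟩ | ⟨_, h' | h'⟩ <;> omega
    · rw [h, Sym2.mk_isDiag_iff] at he
      have := i.2
      exact xvtx_ne k _ _ (show (2 * i.1 : ℕ) ≠ 2 * i.1 + 1 by omega) he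

/-- The all-zero signing. -/
def γ₀ (G : MGraph) : G.E → ZMod 2 := fun _ => 0

/-- The all-one signing. -/
def γ₁ (G : MGraph) : G.E → ZMod 2 := fun _ => 1

/-! ## Matrices with two nonzero entries per row -/

/-- `A` has exactly two nonzero entries in every row. -/
def TwoNonzeroPerRow {m n : ℕ} (A : Matrix (Fin m) (Fin n) ℤ) : Prop :=
  ∀ i, {j | A i j ≠ 0}.ncard = 2

/-- The graph `G(A)` of a matrix with exactly two nonzero entries per row:
vertices are columns, edges are rows, each row joining its two nonzero columns. -/
noncomputable def matrixGraph {m n : ℕ} (A : Matrix (Fin m) (Fin n) ℤ)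
    (h : TwoNonzeroPerRow A) : MGraph where
  V := Fin n
  E := Fin m
  finV := inferInstance
  finE := inferInstance
  ends := fun i => s((Set.ncard_eq_two.mp (h i)).choose,
    (Set.ncard_eq_two.mp (h i)).choose_spec.choose)
  loopless := fun i hi => by
    rw [Sym2.mk_isDiag_iff] at hi
    exact (Set.ncard_eq_two.mp (h i)).choose_spec.choose_spec.1 hi

/-- The signing of `G(A)`: a row is even iff its two nonzero entries have
different signs (i.e. the product of its nonzero entries is negative). -/
def matrixSign {m n : ℕ} (A : Matrix (Fin m) (Fin n) ℤ) : Fin m → ZMod 2 :=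
  fun i => if (∏ j ∈ Finset.univ.filter (fun j => A i j ≠ 0), A i j) < 0 then 0 else 1

/-- The roots of `G⁺_•(A)`: columns containing an entry outside `{-1,0,1}`. -/
def matrixRoots {m n : ℕ} (A : Matrix (Fin m) (Fin n) ℤ) : Set (Fin n) :=
  {j | ∃ i, 1 < (A i j).natAbs}

/-- The TDM-treewidth of the rooted signed graph `G⁺_•(A)` associated to `A`. -/
noncomputable def matrixTDMtw {m n : ℕ} (A : Matrix (Fin m) (Fin n) ℤ)
    (h : TwoNonzeroPerRow A) : ℕ :=
  TDMtw (matrixGraph A h) (fun e => matrixSign A e) (fun j => matrixRoots A j)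

/-- The largest absolute value of an entry of `A`. -/
def maxAbsEntry {m n : ℕ} (A : Matrix (Fin m) (Fin n) ℤ) : ℕ :=
  Finset.sup Finset.univ fun i => Finset.sup Finset.univ fun j => (A i j).natAbs

/-- `A` is totally `Δ`-modular: every square subdeterminant has absolute value at
most `Δ`. -/
def TotallyDeltaModular {m n : ℕ} (A : Matrix (Fin m) (Fin n) ℤ) (Δ : ℕ) : Prop :=
  ∀ (s : ℕ) (r : Fin s → Fin m) (c : Fin s → Fin n),
    Function.Injective r → Function.Injective c →
    ((A.submatrix r c).det).natAbs ≤ Δ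

/-- The set of objective values of feasible points of the integer program
`max { wᵀx : Ax ≤ b, ℓ ≤ x ≤ u, x integral }`. -/
def IPvalues {m n : ℕ} (A : Matrix (Fin m) (Fin n) ℤ) (b : Fin m → ℤ)
    (w ℓ u : Fin n → ℤ) : Set ℤ :=
  {y | ∃ x : Fin n → ℤ, (∀ i, ∑ j, A i j * x j ≤ b i) ∧
    (∀ j, ℓ j ≤ x j ∧ x j ≤ u j) ∧ y = ∑ j, w j * x j}

/-- `o` solves the maximization problem over `S`: it is `none` iff `S` is
infeasible, and otherwise it is the maximum value. -/
def SolvesIP (o : Option ℤ) (S : Set ℤ) : Prop :=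
  (o = none ∧ S = ∅) ∨ ∃ y, o = some y ∧ IsGreatest S y


lemma exists_pair {α : Type} (z : Sym2 α) : ∃ p : α × α, z = s(p.1, p.2) :=
  Sym2.ind (fun a b => ⟨(a, b), rfl⟩) z

/-- A chosen first endpoint of an edge. -/
noncomputable def MGraph.ep1 (G : MGraph) (e : G.E) : G.V :=
  (exists_pair (G.ends e)).choose.1

/-- A chosen second endpoint of an edge. -/
noncomputable def MGraph.ep2 (G : MGraph) (e : G.E) : G.V :=
  (exists_pair (G.ends e)).choose.2

lemma MGraph.ends_ep (G : MGraph) (e : G.E) : G.ends e = s(G.ep1 e, G.ep2 e) :=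
  (exists_pair (G.ends e)).choose_spec

lemma map_inl_not_isDiag {α β : Type} (z : Sym2 α) (hz : ¬ z.IsDiag) :
    ¬ (z.map (Sum.inl : α → α ⊕ β)).IsDiag := by
  induction z using Sym2.ind with
  | _ a b =>
    simp only [Sym2.map_pair_eq, Sym2.mk_isDiag_iff] at *
    exact fun h => hz (by injection h)

/-- The graph obtained from `(G,γ)` by subdividing every even edge exactly once. -/
noncomputable def subdivideEven (G : MGraph) (γ : G.E → ZMod 2) : MGraph where
  V := G.V ⊕ {e : G.E // γ e = 0}
  E := {e : G.E // γ e ≠ 0} ⊕ ({e : G.E // γ e = 0} × Bool)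
  finV := inferInstance
  finE := inferInstance
  ends := fun x =>
    match x with
    | .inl e => (G.ends e.1).map .inl
    | .inr (e, b) => s(.inr e, .inl (if b then G.ep1 e.1 else G.ep2 e.1))
  loopless := fun x => by
    match x with
    | .inl e => exact map_inl_not_isDiag _ (G.loopless e.1)
    | .inr (e, b) =>
      rw [Sym2.mk_isDiag_iff]
      simp

/-- Minimum degree at least `d` (each vertex is incident to at least `d` edges). -/
def minDegreeGE (G : MGraph) (d : ℕ) : Prop :=
  ∀ v : G.V, d ≤ {e : G.E | v ∈ G.ends e}.ncard

/-- The `j`-th vertex of the subdividing path: `u`, then `ℓ` new internal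
vertices, then `v`. -/
def pathVert {α : Type} (u v : α) (ℓ : ℕ) (j : Fin (ℓ + 2)) : α ⊕ Fin ℓ :=
  if h0 : j.1 = 0 then .inl u
  else if h1 : j.1 = ℓ + 1 then .inl v
  else .inr ⟨j.1 - 1, by have := j.2; omega⟩

/-- The graph obtained from `G` by replacing the edge `e₀` (with ends `u,v`) by a
path with `ℓ` internal vertices (hence `ℓ + 1` edges). -/
def replaceEdge (G : MGraph) (e₀ : G.E) (u v : G.V) (h : G.ends e₀ = s(u, v))
    (ℓ : ℕ) : MGraph where
  V := G.V ⊕ Fin ℓ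
  E := {e : G.E // e ≠ e₀} ⊕ Fin (ℓ + 1)
  finV := inferInstance
  finE := inferInstance
  ends := fun x =>
    match x with
    | .inl e => (G.ends e.1).map .inl
    | .inr i => s(pathVert u v ℓ ⟨i.1, by have := i.2; omega⟩,
        pathVert u v ℓ ⟨i.1 + 1, by have := i.2; omega⟩)
  loopless := fun x => by
    match x with
    | .inl e => exact map_inl_not_isDiag _ (G.loopless e.1)
    | .inr i =>
      rw [Sym2.mk_isDiag_iff]
      have huv : u ≠ v := by
        intro hc
        exact G.loopless e₀ (by rw [h, hc]; simp)
      have hi := i.2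
      simp only [pathVert]
      split_ifs <;> (simp_all; try omega)

/-- The signing of `replaceEdge`: old edges keep their sign, the `i`-th path edge
gets sign `δ i`. -/
def replaceGamma {G : MGraph} {e₀ : G.E} {u v : G.V} {h : G.ends e₀ = s(u, v)}
    {ℓ : ℕ} (γ : G.E → ZMod 2) (δ : Fin (ℓ + 1) → ZMod 2) :
    (replaceEdge G e₀ u v h ℓ).E → ZMod 2 :=
  fun x => match x with
  | .inl e => γ e.1
  | .inr i => δ i


/-! ### Auxiliary machinery for Statement 10 -/

set_option linter.unusedSectionVars false

section Aux

open SimpleGraph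

variable {ι : Type} {T : SimpleGraph ι}

/-- adjacency within a set of tree nodes -/
def trel (T : SimpleGraph ι) (A : Set ι) (p q : ι) : Prop := p ∈ A ∧ q ∈ A ∧ T.Adj p q

/-- connected-within-set -/
def TConn (T : SimpleGraph ι) (A : Set ι) : Prop :=
  ∀ x ∈ A, ∀ y ∈ A, Relation.ReflTransGen (trel T A) x y

lemma trel_mono {A B : Set ι} (h : A ⊆ B) : ∀ x y, trel T A x y → trel T B x y :=
  fun _ _ ⟨h1, h2, h3⟩ => ⟨h h1, h h2, h3⟩

lemma rtg_trel_mono {A B : Set ι} (h : A ⊆ B) {x y : ι}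
    (hx : Relation.ReflTransGen (trel T A) x y) :
    Relation.ReflTransGen (trel T B) x y :=
  Relation.ReflTransGen.mono (fun a b => trel_mono h a b) _ _ hx

lemma induce_walk_rtg {A : Set ι} {a b : ↥A} (w : (T.induce A).Walk a b) :
    Relation.ReflTransGen (trel T A) a.1 b.1 := by
  induction w with
  | nil => exact Relation.ReflTransGen.refl
  | cons h p ih =>
    exact Relation.ReflTransGen.head ⟨(by exact Subtype.coe_prop _), Subtype.coe_prop _, h⟩ ih

lemma induce_tconn {A : Set ι} (h : (T.induce A).Connected) : TConn T A := by
  intro x hx y hy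
  obtain ⟨w⟩ := h.preconnected ⟨x, hx⟩ ⟨y, hy⟩
  exact induce_walk_rtg w

lemma rtg_exists_walk {A : Set ι} {x y : ι} (hx : x ∈ A)
    (h : Relation.ReflTransGen (trel T A) x y) :
    ∃ w : T.Walk x y, ∀ u ∈ w.support, u ∈ A := by
  induction h with
  | refl => exact ⟨SimpleGraph.Walk.nil, by simp [hx]⟩
  | tail hsteps hstep ih =>
    obtain ⟨w, hw⟩ := ih
    refine ⟨w.concat hstep.2.2, ?_⟩
    intro u hu
    rw [SimpleGraph.Walk.support_concat, List.mem_append] at hu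
    rcases hu with h' | h'
    · exact hw u h'
    · simp at h'; subst h'; exact hstep.2.1

lemma walk_rtg {A : Set ι} {x y : ι} (w : T.Walk x y) (hw : ∀ u ∈ w.support, u ∈ A) :
    Relation.ReflTransGen (trel T A) x y := by
  induction w with
  | nil => exact Relation.ReflTransGen.refl
  | @cons a b c h p ih =>
    refine Relation.ReflTransGen.head ⟨hw a (by simp), hw b (by simp), h⟩ (ih ?_)
    intro u hu
    exact hw u (by simp [hu])

variable [DecidableEq ι]

/-- In a tree, any path between two vertices of a connected-within set stays in the set. -/
lemma subtree_path (hT : T.IsTree) {A : Set ι} (hA : TConn T A) {x y : ι}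
    (hx : x ∈ A) (hy : y ∈ A) (p : T.Walk x y) (hp : p.IsPath) :
    ∀ u ∈ p.support, u ∈ A := by
  obtain ⟨w, hw⟩ := rtg_exists_walk hx (hA x hx y hy)
  have hq : w.bypass.IsPath := SimpleGraph.Walk.bypass_isPath w
  have := isAcyclic_iff_path_unique.mp hT.2 ⟨p, hp⟩ ⟨w.bypass, hq⟩
  have hsup : p.support = w.bypass.support := by
    rw [show p = (⟨p, hp⟩ : T.Path x y).1 from rfl, this]
  rw [hsup]
  exact fun u hu => hw u (SimpleGraph.Walk.support_bypass_subset w hu)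

lemma tconn_inter (hT : T.IsTree) {A B : Set ι} (hA : TConn T A) (hB : TConn T B) :
    TConn T (A ∩ B) := by
  intro x hx y hy
  obtain ⟨w⟩ := hT.1.preconnected x y
  have hp := SimpleGraph.Walk.bypass_isPath w
  have h1 := subtree_path hT hA hx.1 hy.1 w.bypass hp
  have h2 := subtree_path hT hB hx.2 hy.2 w.bypass hp
  exact walk_rtg w.bypass (fun u hu => ⟨h1 u hu, h2 u hu⟩)

lemma exists_last_mem {x y : ι} (w : T.Walk x y) (S : Set ι)
    (hne : ∃ u ∈ w.support, u ∈ S) :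
    ∃ m, m ∈ S ∧ ∃ w2 : T.Walk m y, (∀ u ∈ w2.support, u ∈ w.support) ∧
      (∀ u ∈ w2.support, u ∈ S → u = m) ∧ (w.IsPath → w2.IsPath) := by
  induction w with
  | @nil a =>
    obtain ⟨u, hu, huS⟩ := hne
    simp at hu; subst hu
    exact ⟨u, huS, SimpleGraph.Walk.nil, by simp, by simp, fun h => h⟩
  | @cons a b c h p ih =>
    by_cases hp : ∃ u ∈ p.support, u ∈ S
    · obtain ⟨m, hmS, w2, hsub, hlast, hpath⟩ := ih hp
      exact ⟨m, hmS, w2, fun u hu => by simp [hsub u hu],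
        hlast, fun hh => hpath hh.of_cons⟩
    · obtain ⟨u, hu, huS⟩ := hne
      rw [SimpleGraph.Walk.support_cons] at hu
      rcases List.mem_cons.mp hu with h' | h'
      · subst h'
        refine ⟨u, huS, SimpleGraph.Walk.cons h p, fun v hv => hv, ?_, fun hh => hh⟩
        intro v hv hvS
        rw [SimpleGraph.Walk.support_cons] at hv
        rcases List.mem_cons.mp hv with h'' | h''
        · exact h''
        · exact absurd ⟨v, h'', hvS⟩ hp
      · exact absurd ⟨u, h', huS⟩ hp

lemma isPath_append {x y z : ι} {p : T.Walk x y} {q : T.Walk y z}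
    (hp : p.IsPath) (hq : q.IsPath)
    (hint : ∀ u ∈ p.support, u ∈ q.support → u = y) :
    (p.append q).IsPath := by
  rw [SimpleGraph.Walk.isPath_def] at *
  rw [SimpleGraph.Walk.support_append, List.nodup_append]
  refine ⟨hp, hq.sublist (List.tail_sublist _), ?_⟩
  intro u hu v hu' huv
  subst huv
  have huq : u ∈ q.support := List.mem_of_mem_tail hu'
  have := hint u hu huq
  subst this
  have : q.support = u :: q.support.tail := by
    rw [← SimpleGraph.Walk.support_eq_cons]
  rw [this] at hq
  exact (List.nodup_cons.mp hq).1 hu'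

lemma three_helly (hT : T.IsTree) {A B C : Set ι} (hA : TConn T A) (hB : TConn T B)
    (hC : TConn T C) (hab : (A ∩ B).Nonempty) (hac : (A ∩ C).Nonempty)
    (hbc : (B ∩ C).Nonempty) : (A ∩ B ∩ C).Nonempty := by
  obtain ⟨a, haB, haC⟩ := hbc
  obtain ⟨b, hbA, hbC⟩ := hac
  obtain ⟨c, hcA, hcB⟩ := hab
  obtain ⟨w0⟩ := hT.1.preconnected b c
  set P := w0.bypass with hPdef
  have hPpath : P.IsPath := w0.bypass_isPath
  have hPA : ∀ u ∈ P.support, u ∈ A := subtree_path hT hA hbA hcA P hPpath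
  obtain ⟨m, hmC, w2, hsub, hlast, hw2path⟩ :=
    exists_last_mem P C ⟨b, P.start_mem_support, hbC⟩
  have hw2p : w2.IsPath := hw2path hPpath
  have hmA : m ∈ A := hPA m (hsub m w2.start_mem_support)
  obtain ⟨w1⟩ := hT.1.preconnected m a
  set Q := w1.bypass with hQdef
  have hQpath : Q.IsPath := w1.bypass_isPath
  have hQC : ∀ u ∈ Q.support, u ∈ C := subtree_path hT hC hmC haC Q hQpath
  have happ : (w2.reverse.append Q).IsPath := by
    refine isPath_append hw2p.reverse hQpath ?_
    intro u hu huQ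
    rw [SimpleGraph.Walk.support_reverse, List.mem_reverse] at hu
    exact hlast u hu (hQC u huQ)
  have hAB : ∀ u ∈ (w2.reverse.append Q).support, u ∈ B :=
    subtree_path hT hB hcB haB _ happ
  have hmB : m ∈ B := by
    refine hAB m ?_
    rw [SimpleGraph.Walk.mem_support_append_iff]
    left
    rw [SimpleGraph.Walk.support_reverse, List.mem_reverse]
    exact w2.start_mem_support
  exact ⟨m, ⟨hmA, hmB⟩, hmC⟩

lemma helly (hT : T.IsTree) : ∀ (n : ℕ) (S : Fin (n + 1) → Set ι),
    (∀ i, TConn T (S i)) → (∀ i j, (S i ∩ S j).Nonempty) → ∃ t, ∀ i, t ∈ S i := by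
  intro n
  induction n with
  | zero =>
    intro S hconn hpair
    obtain ⟨t, ht, -⟩ := hpair 0 0
    refine ⟨t, fun i => ?_⟩
    have : i = 0 := Fin.ext (by omega)
    rw [this]; exact ht
  | succ n ih =>
    intro S hconn hpair
    set S' : Fin (n + 1) → Set ι := fun i => S i.castSucc ∩ S (Fin.last (n + 1)) with hS'
    have hpair' : ∀ i j, (S' i ∩ S' j).Nonempty := by
      intro i j
      obtain ⟨t, ⟨h1, h2⟩, h3⟩ := three_helly hT (hconn i.castSucc) (hconn j.castSucc)
        (hconn (Fin.last (n+1))) (hpair _ _) (hpair _ _) (hpair _ _)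
      exact ⟨t, ⟨h1, h3⟩, ⟨h2, h3⟩⟩
    obtain ⟨t, ht⟩ := ih S' (fun i => tconn_inter hT (hconn _) (hconn _)) hpair'
    refine ⟨t, fun i => ?_⟩
    rcases Fin.lastCases (motive := fun i => i = Fin.last (n+1) ∨ ∃ j : Fin (n+1), i = j.castSucc)
      (Or.inl rfl) (fun j => Or.inr ⟨j, rfl⟩) i with h | ⟨j, rfl⟩
    · rw [h]; exact (ht 0).2
    · exact (ht j).1

end Aux

section GraphAux

variable {G : MGraph}

/-- adjacency within a vertex set of a multigraph -/
def grel (G : MGraph) (S : Set G.V) (x y : G.V) : Prop :=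
  x ∈ S ∧ y ∈ S ∧ ∃ e, G.ends e = s(x, y)

lemma grel_symm {S : Set G.V} : Symmetric (grel G S) := by
  rintro x y ⟨h1, h2, e, he⟩
  exact ⟨h2, h1, e, by rw [he, Sym2.eq_swap]⟩

lemma grel_mono {S S' : Set G.V} (h : S ⊆ S') {x y : G.V}
    (hx : Relation.ReflTransGen (grel G S) x y) :
    Relation.ReflTransGen (grel G S') x y :=
  Relation.ReflTransGen.mono (r := grel G S) (p := grel G S') (fun _ _ ⟨h1, h2, h3⟩ => ⟨h h1, h h2, h3⟩) _ _ hx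

/-- the set of tree nodes whose bag meets `S` -/
def tauSet (D : TreeDecomp G) (S : Set G.V) : Set D.ι := {t | ∃ v ∈ S, v ∈ D.bag t}

lemma tconn_bagNodes (D : TreeDecomp G) (v : G.V) : TConn D.tree {t | v ∈ D.bag t} :=
  induce_tconn (D.bag_connected v)

lemma bagNodes_subset_tau (D : TreeDecomp G) {S : Set G.V} {v : G.V} (hv : v ∈ S) :
    {t | v ∈ D.bag t} ⊆ tauSet D S := fun t ht => ⟨v, hv, ht⟩

lemma tconn_tau (D : TreeDecomp G) {S : Set G.V}
    (hS : ∀ a ∈ S, ∀ b ∈ S, Relation.ReflTransGen (grel G S) a b) :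
    TConn D.tree (tauSet D S) := by
  have key : ∀ (b : G.V) (s' : D.ι), b ∈ D.bag s' → ∀ (a : G.V),
      Relation.ReflTransGen (grel G S) a b → a ∈ S →
      ∀ s, a ∈ D.bag s → Relation.ReflTransGen (trel D.tree (tauSet D S)) s s' := by
    intro b s' hbs' a hab
    induction hab using Relation.ReflTransGen.head_induction_on with
    | refl =>
      intro hbS s hbs
      exact rtg_trel_mono (bagNodes_subset_tau D hbS)
        (tconn_bagNodes D b s hbs s' hbs')
    | @head a c hac hcb ih =>
      intro haS s has
      obtain ⟨haS', hcS, e, he⟩ := hac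
      obtain ⟨s0, hs0⟩ := D.covers_edge e
      have has0 : a ∈ D.bag s0 := hs0 a (by rw [he]; exact Sym2.mem_mk_left _ _)
      have hcs0 : c ∈ D.bag s0 := hs0 c (by rw [he]; exact Sym2.mem_mk_right _ _)
      refine Relation.ReflTransGen.trans ?_ (ih hcS s0 hcs0)
      exact rtg_trel_mono (bagNodes_subset_tau D haS)
        (tconn_bagNodes D a s has s0 has0)
  intro s hs s' hs'
  obtain ⟨a, haS, haB⟩ := hs
  obtain ⟨b, hbS, hbB⟩ := hs'
  exact key b s' hbB a (hS a haS b hbS) haS s haB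

/-- escaping from `L` along a connected set containing a non-`L` vertex -/
lemma escape_L {K : Set G.V} (D : KFreeDecomp G K) {S : Set G.V} {t : D.ι} {v r : G.V}
    (hr : r ∉ D.L) (hrS : r ∈ S)
    (hchain : Relation.ReflTransGen (grel G S) v r) :
    v ∈ D.bag t → ∃ w ∈ S, w ∈ D.bag t ∧ w ∉ D.L := by
  induction hchain using Relation.ReflTransGen.head_induction_on with
  | refl =>
    intro hrt
    exact ⟨r, hrS, hrt, hr⟩
  | @head a c hac hcb ih =>
    intro hat
    by_cases haL : a ∈ D.L
    · obtain ⟨haS, hcS, e, he⟩ := hac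
      obtain ⟨s0, hs0⟩ := D.covers_edge e
      have has0 : a ∈ D.bag s0 := hs0 a (by rw [he]; exact Sym2.mem_mk_left _ _)
      obtain ⟨t1, -, huniq⟩ := D.unique_bag a haL
      have h1 : s0 = t := by rw [huniq s0 has0, ← huniq t hat]
      have hct : c ∈ D.bag t := h1 ▸ hs0 c (by rw [he]; exact Sym2.mem_mk_right _ _)
      exact ih hct
    · exact ⟨a, hac.1, hat, haL⟩

end GraphAux
section GridAux

variable {G : MGraph} {N : ℕ}

/-- the cross with index `i` in the grid -/
def crossModel (M : MinorModel (gridGraph N) G) (i : Fin N) : Set G.V :=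
  {x | ∃ u : Fin N × Fin N, (u.1 = i ∨ u.2 = i) ∧ x ∈ M.bs u}

lemma bs_subset_cross (M : MinorModel (gridGraph N) G) {i : Fin N}
    {u : Fin N × Fin N} (hu : u.1 = i ∨ u.2 = i) : M.bs u ⊆ crossModel M i :=
  fun x hx => ⟨u, hu, hx⟩

lemma grid_edge (M : MinorModel (gridGraph N) G) {u v : Fin N × Fin N}
    (h : gridAdj (u.1.1, u.2.1) (v.1.1, v.2.1)) :
    ∃ a ∈ M.bs u, ∃ b ∈ M.bs v, ∃ e, G.ends e = s(a, b) := by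
  obtain ⟨a, ha, b, hb, hab⟩ := M.em_ends ⟨s(u, v), u, v, h, rfl⟩ u v rfl
  exact ⟨a, ha, b, hb, _, hab⟩

lemma bs_rtg (M : MinorModel (gridGraph N) G) {X : Set G.V} {u : Fin N × Fin N}
    (hsub : M.bs u ⊆ X) {a b : G.V} (ha : a ∈ M.bs u) (hb : b ∈ M.bs u) :
    Relation.ReflTransGen (grel G X) a b := by
  refine Relation.ReflTransGen.mono ?_ _ _ (M.bs_connected u a ha b hb)
  rintro x y ⟨h1, h2, h3⟩
  exact ⟨hsub h1, hsub h2, h3⟩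

lemma step_rtg (M : MinorModel (gridGraph N) G) {X : Set G.V} {u v : Fin N × Fin N}
    (hu : M.bs u ⊆ X) (hv : M.bs v ⊆ X)
    (h : gridAdj (u.1.1, u.2.1) (v.1.1, v.2.1)) {a b : G.V}
    (ha : a ∈ M.bs u) (hb : b ∈ M.bs v) :
    Relation.ReflTransGen (grel G X) a b := by
  obtain ⟨a', ha', b', hb', e, he⟩ := grid_edge M h
  refine (bs_rtg M hu ha ha').trans (Relation.ReflTransGen.head
    ⟨hu ha', hv hb', e, he⟩ (bs_rtg M hv hb' hb))

lemma col_chain (M : MinorModel (gridGraph N) G) (i : Fin N) :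
    ∀ (d : ℕ) (a b : Fin N), a.1 + d = b.1 →
    ∀ x ∈ M.bs (a, i), ∀ y ∈ M.bs (b, i),
      Relation.ReflTransGen (grel G (crossModel M i)) x y := by
  intro d
  induction d with
  | zero =>
    intro a b hab x hx y hy
    have : a = b := Fin.ext (by omega)
    subst this
    exact bs_rtg M (bs_subset_cross M (Or.inr rfl)) hx hy
  | succ d ih =>
    intro a b hab x hx y hy
    have ha1 : a.1 + 1 < N := by omega
    set a' : Fin N := ⟨a.1 + 1, ha1⟩ with ha'
    obtain ⟨z, hz⟩ := M.bs_nonempty (a', i)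
    have hadj : gridAdj (((a, i) : Fin N × Fin N).1.1, ((a, i) : Fin N × Fin N).2.1)
        (((a', i) : Fin N × Fin N).1.1, ((a', i) : Fin N × Fin N).2.1) := by
      right; exact ⟨rfl, Or.inl rfl⟩
    refine (step_rtg M (u := (a, i)) (v := (a', i)) (bs_subset_cross M (Or.inr rfl))
      (bs_subset_cross M (Or.inr rfl))
      hadj hx hz).trans (ih a' b (by simp [ha']; omega) z hz y hy)

lemma row_chain (M : MinorModel (gridGraph N) G) (i : Fin N) :
    ∀ (d : ℕ) (a b : Fin N), a.1 + d = b.1 →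
    ∀ x ∈ M.bs (i, a), ∀ y ∈ M.bs (i, b),
      Relation.ReflTransGen (grel G (crossModel M i)) x y := by
  intro d
  induction d with
  | zero =>
    intro a b hab x hx y hy
    have : a = b := Fin.ext (by omega)
    subst this
    exact bs_rtg M (bs_subset_cross M (Or.inl rfl)) hx hy
  | succ d ih =>
    intro a b hab x hx y hy
    have ha1 : a.1 + 1 < N := by omega
    set a' : Fin N := ⟨a.1 + 1, ha1⟩ with ha'
    obtain ⟨z, hz⟩ := M.bs_nonempty (i, a')
    have hadj : gridAdj (((i, a) : Fin N × Fin N).1.1, ((i, a) : Fin N × Fin N).2.1)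
        (((i, a') : Fin N × Fin N).1.1, ((i, a') : Fin N × Fin N).2.1) := by
      left; exact ⟨rfl, Or.inl rfl⟩
    refine (step_rtg M (u := (i, a)) (v := (i, a')) (bs_subset_cross M (Or.inl rfl))
      (bs_subset_cross M (Or.inl rfl))
      hadj hx hz).trans (ih a' b (by simp [ha']; omega) z hz y hy)

lemma col_chain' (M : MinorModel (gridGraph N) G) (i : Fin N) (a b : Fin N)
    {x y : G.V} (hx : x ∈ M.bs (a, i)) (hy : y ∈ M.bs (b, i)) :
    Relation.ReflTransGen (grel G (crossModel M i)) x y := by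
  rcases le_or_gt a.1 b.1 with h | h
  · exact col_chain M i (b.1 - a.1) a b (by omega) x hx y hy
  · exact (@Relation.ReflTransGen.stdSymm _ _ ⟨fun _ _ h => grel_symm h⟩).symm _ _
      (col_chain M i (a.1 - b.1) b a (by omega) y hy x hx)

lemma row_chain' (M : MinorModel (gridGraph N) G) (i : Fin N) (a b : Fin N)
    {x y : G.V} (hx : x ∈ M.bs (i, a)) (hy : y ∈ M.bs (i, b)) :
    Relation.ReflTransGen (grel G (crossModel M i)) x y := by
  rcases le_or_gt a.1 b.1 with h | h
  · exact row_chain M i (b.1 - a.1) a b (by omega) x hx y hy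
  · exact (@Relation.ReflTransGen.stdSymm _ _ ⟨fun _ _ h => grel_symm h⟩).symm _ _
      (row_chain M i (a.1 - b.1) b a (by omega) y hy x hx)

lemma cross_to_center (M : MinorModel (gridGraph N) G) (i : Fin N)
    {u : Fin N × Fin N} (hu : u.1 = i ∨ u.2 = i) {x y : G.V}
    (hx : x ∈ M.bs u) (hy : y ∈ M.bs (i, i)) :
    Relation.ReflTransGen (grel G (crossModel M i)) x y := by
  rcases hu with h | h
  · have : u = (i, u.2) := by rw [← h]
    rw [this] at hx
    exact row_chain' M i u.2 i hx hy
  · have : u = (u.1, i) := by rw [← h]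
    rw [this] at hx
    exact col_chain' M i u.1 i hx hy

lemma cross_conn (M : MinorModel (gridGraph N) G) (i : Fin N) :
    ∀ x ∈ crossModel M i, ∀ y ∈ crossModel M i,
      Relation.ReflTransGen (grel G (crossModel M i)) x y := by
  rintro x ⟨u, hu, hx⟩ y ⟨v, hv, hy⟩
  obtain ⟨z, hz⟩ := M.bs_nonempty (i, i)
  exact (cross_to_center M i hu hx hz).trans
    ((@Relation.ReflTransGen.stdSymm _ _ ⟨fun _ _ h => grel_symm h⟩).symm _ _ (cross_to_center M i hv hy hz))

end GridAux
/-- The one-bag tree `K`-free-decomposition. -/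
noncomputable def trivDecomp (G : MGraph) (K : Set G.V) : KFreeDecomp G K where
  ι := PUnit
  tree := ⊥
  isTree := by
    constructor
    · exact (SimpleGraph.connected_iff _).mpr ⟨fun u v => by rw [Subsingleton.elim u v], ⟨PUnit.unit⟩⟩
    · intro v c hc
      cases c with
      | nil => exact hc.ne_nil rfl
      | cons h p => simp at h
  bag := fun _ => Set.univ
  covers_vertex := fun v => ⟨PUnit.unit, trivial⟩
  covers_edge := fun e => ⟨PUnit.unit, fun v _ => trivial⟩
  bag_connected := fun v =>
    (SimpleGraph.connected_iff _).mpr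
      ⟨fun a b => by rw [Subsingleton.elim a b], ⟨⟨PUnit.unit, trivial⟩⟩⟩
  L := ∅
  L_disj := by simp
  unique_bag := fun v hv => absurd hv (Set.notMem_empty v)
  leaf_bag := fun v hv => absurd hv (Set.notMem_empty v)

/-- Containing the `(3k+1) × (3k+1)` grid rooted at its first
row as a rooted minor forces `K`-free treewidth at least `k`. -/
theorem statement_10 (k : ℕ) (G : MGraph) (K : Set G.V)
    (h : IsRootedMinor (gridGraph (3 * k + 1)) (firstRow (3 * k + 1)) G K) :
    k ≤ twK G K := by
  rcases Nat.eq_zero_or_pos k with hk | hk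
  · subst hk; exact Nat.zero_le _
  obtain ⟨M, hroot⟩ := h
  refine le_csInf ⟨(trivDecomp G K).width, trivDecomp G K, rfl⟩ ?_
  rintro w ⟨D, rfl⟩
  haveI : DecidableEq D.ι := Classical.decEq _
  haveI : Fintype G.V := Fintype.ofFinite _
  haveI : DecidableEq G.V := Classical.decEq _
  have hT := D.isTree
  set S : Fin (3 * k + 1) → Set D.ι :=
    fun i => tauSet D.toTreeDecomp (crossModel M i) with hS
  have hconn : ∀ i, TConn D.tree (S i) :=
    fun i => tconn_tau D.toTreeDecomp (cross_conn M i)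
  have hpair : ∀ i j, (S i ∩ S j).Nonempty := by
    intro i j
    obtain ⟨v, hv⟩ := M.bs_nonempty (j, i)
    obtain ⟨t, ht⟩ := D.covers_vertex v
    exact ⟨t, ⟨v, ⟨(j, i), Or.inr rfl, hv⟩, ht⟩, ⟨v, ⟨(j, i), Or.inl rfl, hv⟩, ht⟩⟩
  obtain ⟨t, ht⟩ := helly hT (3 * k) S hconn hpair
  have hesc : ∀ i : Fin (3 * k + 1),
      ∃ w, w ∈ crossModel M i ∧ w ∈ D.bag t ∧ w ∉ D.L := by
    intro i
    obtain ⟨v, hvX, hvB⟩ := ht i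
    obtain ⟨r, hrbs, hrK⟩ := hroot ((0 : Fin (3 * k + 1)), i) rfl
    have hrL : r ∉ D.L := fun hl => (Set.disjoint_left.mp D.L_disj) hl hrK
    have hrX : r ∈ crossModel M i := ⟨((0 : Fin (3 * k + 1)), i), Or.inr rfl, hrbs⟩
    exact escape_L D hrL hrX (cross_conn M i v hvX r hrX) hvB
  choose f hfX hfB hfL using hesc
  have hcard : 3 * k + 1 ≤ 2 * (D.bag t \ D.L).ncard := by
    have h1 : (Finset.univ : Finset (Fin (3 * k + 1))).card ≤
        2 * (Finset.univ.image f).card := by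
      refine Finset.card_le_mul_card_image Finset.univ 2 ?_
      intro b hb
      obtain ⟨i0, -, hi0⟩ := Finset.mem_image.mp hb
      obtain ⟨u0, hu0or, hu0bs⟩ := hi0 ▸ hfX i0
      have hsub : (Finset.univ.filter (fun a => f a = b)) ⊆ {u0.1, u0.2} := by
        intro i hi
        have hfi : f i = b := (Finset.mem_filter.mp hi).2
        obtain ⟨u, huor, hubs⟩ := hfX i
        rw [hfi] at hubs
        have : u = u0 := by
          by_contra hne
          exact (Set.disjoint_left.mp (M.bs_disjoint u u0 hne)) hubs hu0bs
        subst this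
        rcases huor with h' | h'
        · exact Finset.mem_insert.mpr (Or.inl h'.symm)
        · exact Finset.mem_insert.mpr (Or.inr (Finset.mem_singleton.mpr h'.symm))
      calc (Finset.univ.filter (fun a => f a = b)).card
          ≤ ({u0.1, u0.2} : Finset (Fin (3 * k + 1))).card := Finset.card_le_card hsub
        _ ≤ 2 := by
            refine le_trans (Finset.card_insert_le _ _) ?_
            simp
    have hfin : (D.bag t \ D.L).Finite := Set.toFinite _
    have h2 : (Finset.univ.image f).card ≤ (D.bag t \ D.L).ncard := by
      have hsub : Finset.univ.image f ⊆ hfin.toFinset := by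
        intro b hb
        obtain ⟨i, -, rfl⟩ := Finset.mem_image.mp hb
        rw [Set.Finite.mem_toFinset]
        exact ⟨hfB i, hfL i⟩
      have := Finset.card_le_card hsub
      rwa [Set.ncard_eq_toFinset_card _ hfin]
    have h3 : (Finset.univ : Finset (Fin (3 * k + 1))).card = 3 * k + 1 := by simp
    omega
  have hk1 : k + 1 ≤ (D.bag t \ D.L).ncard := by omega
  have hbdd : BddAbove (Set.range fun t' : D.ι => ((D.bag t' \ D.L).ncard - 1)) := by
    refine ⟨Nat.card G.V, ?_⟩
    rintro x ⟨t', rfl⟩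
    have := Set.ncard_le_ncard (Set.subset_univ (D.bag t' \ D.L)) Set.finite_univ
    rw [Set.ncard_univ] at this
    dsimp only
    omega
  calc k ≤ (D.bag t \ D.L).ncard - 1 := by omega
    _ ≤ D.width := le_ciSup hbdd t

end TDMPaper
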